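/- Let V be a complex vector space of odd finite dimension equipped with a nondegenerate symmetric bilinear form B, and let Q be a finite abelian group of odd order acting linearly on V and preserving B. Then Q has a nonzero fixed vector: the subspace V^Q = {v ∈ V : g·v = v for all g ∈ Q} is nonzero. -/

import Mathlib

open Module LinearMap Matrix

private lemma even_of_skew (U : Type) [AddCommGroup U] [Module ℂ U] [FiniteDimensional ℂ U]
    (B : U →ₗ[ℂ] U →ₗ[ℂ] ℂ) (hnd : ∀ u : U, (∀ w : U, B u w = 0) → u = 0)
    (s : U →ₗ[ℂ] U) (hs : Function.Bijective s)
    (hskew : ∀ u w : U, B (s u) w = - B u (s w)) : Even (Module.finrank ℂ U) := by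
  classical
  let b := Module.finBasis ℂ U
  set d := Module.finrank ℂ U with hd
  set G : Matrix (Fin d) (Fin d) ℂ := LinearMap.toMatrix₂ b b B with hG
  set S : Matrix (Fin d) (Fin d) ℂ := LinearMap.toMatrix b b s with hS
  have h1 : B.compl₁₂ s (LinearMap.id) = - (B.compl₁₂ (LinearMap.id) s) := by
    ext u w
    simp [LinearMap.compl₁₂_apply, hskew]
  have h2 : Sᵀ * G = -(G * S) := by
    have e1 := LinearMap.toMatrix₂_compl₁₂ b b b b B s (LinearMap.id)
    have e2 := LinearMap.toMatrix₂_compl₁₂ b b b b B (LinearMap.id) s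
    rw [h1] at e1
    simp only [map_neg, LinearMap.toMatrix_id] at e1 e2
    rw [e2] at e1
    simpa [Matrix.mul_one, Matrix.one_mul] using e1.symm
  have hGdet : G.det ≠ 0 := by
    intro h0
    obtain ⟨c, hc0, hcG⟩ := Matrix.exists_vecMul_eq_zero_iff.mpr h0
    have hu : (∑ i, c i • b i) = 0 := by
      apply hnd
      intro w
      have hB0 : B (∑ i, c i • b i) = 0 := by
        apply b.ext
        intro j
        have : B (∑ i, c i • b i) (b j) = (c ᵥ* G) j := by
          simp [Matrix.vecMul, dotProduct, hG, LinearMap.toMatrix₂_apply,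
            map_sum, LinearMap.sum_apply, mul_comm]
        rw [this, hcG]; rfl
      rw [hB0]; rfl
    apply hc0
    have : b.equivFun.symm c = 0 := by rw [b.equivFun_symm_apply]; exact hu
    simpa using b.equivFun.symm.injective (by simpa using this)
  have hSdet : S.det ≠ 0 := by
    rw [hS, LinearMap.det_toMatrix]
    exact ((LinearMap.isUnit_iff_ker_eq_bot s).mpr (LinearMap.ker_eq_bot_of_injective hs.1)).map
      LinearMap.det |>.ne_zero
  have hdet : S.det * G.det = (-1 : ℂ) ^ d * (G.det * S.det) := by
    have := congrArg Matrix.det h2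
    simpa [Matrix.det_mul, Matrix.det_transpose, Matrix.det_neg, Fintype.card_fin] using this
  rcases Nat.even_or_odd d with he | ho
  · exact he
  · exfalso
    rw [ho.neg_one_pow] at hdet
    have h1' : S.det * G.det = -(S.det * G.det) := by linear_combination hdet
    have h0 : S.det * G.det = 0 := by
      have := CharZero.eq_neg_self_iff.mp h1'
      exact this
    exact (mul_ne_zero hSdet hGdet) h0

theorem odd_order_fixed_vector_aux : ∀ n : ℕ, ∀ (V : Type) [AddCommGroup V] [Module ℂ V] [FiniteDimensional ℂ V],
    Module.finrank ℂ V = n → Odd n →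
    ∀ (B : V →ₗ[ℂ] V →ₗ[ℂ] ℂ), (∀ v w : V, B v w = B w v) →
    (∀ v : V, (∀ w : V, B v w = 0) → v = 0) →
    ∀ (Q : Type) [CommGroup Q] [Fintype Q], Odd (Fintype.card Q) →
    ∀ (ρ : Q →* (V ≃ₗ[ℂ] V)), (∀ (g : Q) (v w : V), B (ρ g v) (ρ g w) = B v w) →
    ∃ v : V, v ≠ 0 ∧ ∀ g : Q, ρ g v = v := by
  intro n
  induction n using Nat.strong_induction_on with
  | _ n IH =>
    intro V _ _ _ hrank hodd B hsymm hnd Q _ _ hq ρ hpres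
    by_cases htriv : ∀ (g : Q) (v : V), ρ g v = v
    · have hpos : 0 < Module.finrank ℂ V := by
        rw [hrank]; exact hodd.pos
      have : Nontrivial V := Module.nontrivial_of_finrank_pos hpos
      obtain ⟨v, hv⟩ := exists_ne (0 : V)
      exact ⟨v, hv, fun g => htriv g v⟩
    · push_neg at htriv
      obtain ⟨g, v₀, hv₀⟩ := htriv
      set m := Fintype.card Q with hm
      have hm0 : (m : ℂ) ≠ 0 := by
        exact_mod_cast hq.pos.ne'
      set f : Module.End ℂ V := (ρ g : V →ₗ[ℂ] V) with hf
      set f' : Module.End ℂ V := (ρ g⁻¹ : V →ₗ[ℂ] V) with hf'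
      have coeL : ∀ (e : V ≃ₗ[ℂ] V) (k : ℕ),
          ((e ^ k : V ≃ₗ[ℂ] V) : V →ₗ[ℂ] V) = ((e : V →ₗ[ℂ] V)) ^ k := by
        intro e k
        induction k with
        | zero => rfl
        | succ k ih => rw [pow_succ, pow_succ, LinearEquiv.coe_toLinearMap_mul, ih]

      have hff' : f * f' = 1 := by
        rw [hf, hf', ← LinearEquiv.coe_toLinearMap_mul, ← _root_.map_mul,
          mul_inv_cancel, _root_.map_one, LinearEquiv.coe_toLinearMap_one]
        rfl
      have hf'f : f' * f = 1 := by
        rw [hf, hf', ← LinearEquiv.coe_toLinearMap_mul, ← _root_.map_mul,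
          inv_mul_cancel, _root_.map_one, LinearEquiv.coe_toLinearMap_one]
        rfl
      have hfm : f ^ m = 1 := by
        rw [hf, ← coeL, ← map_pow, hm, pow_card_eq_one, _root_.map_one,
          LinearEquiv.coe_toLinearMap_one]
        rfl
      set W : Submodule ℂ V := LinearMap.ker (f - 1) with hW
      set U : Submodule ℂ V := LinearMap.range (f - 1) with hU
      have hmemW : ∀ w : V, w ∈ W ↔ f w = w := by
        intro w
        rw [hW, LinearMap.mem_ker, LinearMap.sub_apply, Module.End.one_apply, sub_eq_zero]
      -- the averaging operator kills U
      set π : Module.End ℂ V := (m : ℂ)⁻¹ • (∑ i ∈ Finset.range m, f ^ i) with hπ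
      have hπU : π * (f - 1) = 0 := by
        rw [hπ, smul_mul_assoc, geom_sum_mul, hfm, sub_self, smul_zero]
      have hπW : ∀ u : V, f u = u → π u = u := by
        intro u hu
        have hiter : ∀ i : ℕ, (f ^ i) u = u := by
          intro i
          induction i with
          | zero => simp
          | succ i ih => rw [pow_succ', Module.End.mul_apply, ih]; exact hu
        rw [hπ, LinearMap.smul_apply, LinearMap.sum_apply]
        simp only [hiter, Finset.sum_const, Finset.card_range]
        rw [← Nat.cast_smul_eq_nsmul ℂ, smul_smul, inv_mul_cancel₀ hm0, one_smul]
      have hdisj : ∀ u : V, u ∈ W → u ∈ U → u = 0 := by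
        intro u hWu hUu
        obtain ⟨x, hx⟩ := hUu
        have h1 : π u = u := hπW u ((hmemW u).mp hWu)
        have h2 : π u = 0 := by
          rw [← hx, ← Module.End.mul_apply, hπU]; rfl
        rw [← h1, h2]
      -- B-orthogonality of W and U
      have hBfix : ∀ w : V, f w = w → ∀ v : V, B w (f v) = B w v := by
        intro w hw v
        have h1 : (ρ g).symm w = w := by
          apply (ρ g).injective; rw [LinearEquiv.apply_symm_apply]; exact hw.symm
        have := hpres g ((ρ g).symm w) v
        rw [LinearEquiv.apply_symm_apply, h1] at this
        exact this
      have horth : ∀ w : V, w ∈ W → ∀ u : V, u ∈ U → B w u = 0 := by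
        intro w hw u hu
        obtain ⟨x, hx⟩ := hu
        have hww : f w = w := (hmemW w).mp hw
        rw [← hx]
        have : (f - 1) x = f x - x := by
          rw [LinearMap.sub_apply, Module.End.one_apply]
        rw [this, map_sub, hBfix w hww x, sub_self]
      have hdisj' : W ⊓ U = ⊥ := by
        rw [Submodule.eq_bot_iff]
        intro u hu
        exact hdisj u hu.1 hu.2
      have hrk : Module.finrank ℂ ↥U + Module.finrank ℂ ↥W = n := by
        rw [← hrank, hU, hW]
        exact LinearMap.finrank_range_add_finrank_ker (f - 1)
      have hsup : W ⊔ U = ⊤ := by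
        apply Submodule.eq_top_of_finrank_eq
        have := Submodule.finrank_sup_add_finrank_inf_eq W U
        rw [hdisj', finrank_bot, add_zero] at this
        rw [this, hrank]
        omega
      -- the skew endomorphism on U
      set s : Module.End ℂ V := f - f' with hs
      have hcomm : f * s = s * f := by
        rw [hs, mul_sub, sub_mul, hff', hf'f]
      have hsU : ∀ u ∈ U, s u ∈ U := by
        rintro u ⟨x, rfl⟩
        refine ⟨s x, ?_⟩
        have : (f - 1) * s = s * (f - 1) := by
          have h1 : (f - 1) * s = f * s - s := by rw [sub_mul, one_mul]
          have h2 : s * (f - 1) = s * f - s := by rw [mul_sub, mul_one]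
          rw [h1, h2, hcomm]

        calc (f - 1) (s x) = ((f - 1) * s) x := rfl
          _ = (s * (f - 1)) x := by rw [this]
          _ = s ((f - 1) x) := rfl
      set sU : ↥U →ₗ[ℂ] ↥U := s.restrict hsU with hsUdef
      have hsinj : Function.Injective sU := by
        rw [← LinearMap.ker_eq_bot, Submodule.eq_bot_iff]
        intro u hu
        have hsu : s (↑u : V) = 0 := by
          rw [← s.restrict_coe_apply hsU u]
          rw [LinearMap.mem_ker.mp hu]
          rfl
        have h1 : f (↑u : V) = f' ↑u := by
          have h2 : f (↑u : V) - f' ↑u = 0 := hsu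
          exact sub_eq_zero.mp h2
        have hf2 : (f ^ 2) (↑u : V) = ↑u := by
          have := congrArg f h1
          calc (f ^ 2) (↑u : V) = f (f ↑u) := by rw [pow_two]; rfl
            _ = f (f' ↑u) := this
            _ = (f * f') ↑u := rfl
            _ = ↑u := by rw [hff']; rfl
        have hfix : f (↑u : V) = ↑u := by
          obtain ⟨k, hk⟩ := hq
          have hk2 : m = 2 * k + 1 := by omega
          have hiter : ∀ j : ℕ, ((f ^ 2) ^ j) (↑u : V) = ↑u := by
            intro j
            induction j with
            | zero => rfl
            | succ j ih => rw [pow_succ', Module.End.mul_apply, ih]; exact hf2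
          have : f ^ (m + 1) = f := by
            rw [pow_succ, hfm, one_mul]
          calc f (↑u : V) = (f ^ (m + 1)) ↑u := by rw [this]
            _ = ((f ^ 2) ^ (k + 1)) ↑u := by
                  rw [← pow_mul]
                  have : m + 1 = 2 * (k + 1) := by omega
                  rw [this]
            _ = ↑u := hiter (k + 1)
        have : (↑u : V) = 0 := hdisj ↑u ((hmemW ↑u).mpr hfix) u.2
        exact Subtype.ext this
      have hsbij : Function.Bijective sU :=
        ⟨hsinj, (LinearMap.injective_iff_surjective).mp hsinj⟩
      -- the restricted bilinear form on U
      set BU : ↥U →ₗ[ℂ] ↥U →ₗ[ℂ] ℂ := (B.domRestrict U).compl₂ U.subtype with hBU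
      have hBUapp : ∀ x y : ↥U, BU x y = B ↑x ↑y := fun x y => rfl
      have hBUnd : ∀ x : ↥U, (∀ y : ↥U, BU x y = 0) → x = 0 := by
        intro x hx
        have : (↑x : V) = 0 := by
          apply hnd
          intro v
          have hv : v ∈ W ⊔ U := by rw [hsup]; trivial
          obtain ⟨w, hw, u, hu, rfl⟩ := Submodule.mem_sup.mp hv
          rw [map_add]
          have h1 : B ↑x w = 0 := by rw [hsymm]; exact horth w hw ↑x x.2
          have h2 : B ↑x u = 0 := hx ⟨u, hu⟩
          rw [h1, h2, add_zero]
        exact Subtype.ext this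
      -- skewness
      have hBf : ∀ v w : V, B (f v) w = B v (f' w) := by
        intro v w
        have := hpres g v (f' w)
        have h2 : (ρ g) (f' w) = w := by
          have : f (f' w) = w := by rw [← Module.End.mul_apply, hff']; rfl
          exact this
        rw [h2] at this
        exact this
      have hBf' : ∀ v w : V, B (f' v) w = B v (f w) := by
        intro v w
        have := hpres g⁻¹ v (f w)
        have h2 : (ρ g⁻¹) (f w) = w := by
          have : f' (f w) = w := by rw [← Module.End.mul_apply, hf'f]; rfl
          exact this
        rw [h2] at this
        exact this
      have hskewU : ∀ x y : ↥U, BU (sU x) y = - BU x (sU y) := by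
        intro x y
        rw [hBUapp, hBUapp, s.restrict_coe_apply, s.restrict_coe_apply]
        have e1 : B (s ↑x) ↑y = B (f ↑x) ↑y - B (f' ↑x) ↑y := by
          have : s (↑x : V) = f ↑x - f' ↑x := rfl
          rw [this, map_sub, LinearMap.sub_apply]
        have e2 : B ↑x (s ↑y) = B ↑x (f ↑y) - B ↑x (f' ↑y) := by
          have : s (↑y : V) = f ↑y - f' ↑y := rfl
          rw [this, map_sub]
        rw [e1, e2, hBf, hBf']
        ring
      have hUeven : Even (Module.finrank ℂ ↥U) :=
        even_of_skew ↥U BU hBUnd sU hsbij hskewU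
      -- W has odd dimension and is a proper subspace
      have hWodd : Odd (Module.finrank ℂ ↥W) := by
        obtain ⟨a, ha⟩ := hUeven
        obtain ⟨b, hb⟩ := hodd
        exact ⟨b - a, by omega⟩
      have hWne : W ≠ ⊤ := by
        intro hW'
        apply hv₀
        have : v₀ ∈ W := hW' ▸ Submodule.mem_top
        exact (hmemW v₀).mp this
      have hWlt : Module.finrank ℂ ↥W < n := by
        rw [← hrank]
        exact Submodule.finrank_lt hWne
      -- W is invariant under the action
      have hWinv : ∀ h : Q, ∀ w ∈ W, (ρ h : V →ₗ[ℂ] V) w ∈ W := by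
        intro h w hw
        rw [hmemW]
        have hcom : (ρ g) ((ρ h) w) = (ρ h) ((ρ g) w) := by
          calc (ρ g) ((ρ h) w) = (ρ g * ρ h) w := rfl
            _ = (ρ (g * h)) w := by rw [_root_.map_mul]
            _ = (ρ (h * g)) w := by rw [mul_comm]
            _ = (ρ h * ρ g) w := by rw [_root_.map_mul]
            _ = (ρ h) ((ρ g) w) := rfl
        have hfw : f w = w := (hmemW w).mp hw
        calc f ((ρ h : V →ₗ[ℂ] V) w) = (ρ g) ((ρ h) w) := rfl
          _ = (ρ h) ((ρ g) w) := hcom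
          _ = (ρ h) (f w) := rfl
          _ = (ρ h) w := by rw [hfw]
      -- restrict the action to W
      set φ : Q → (↥W →ₗ[ℂ] ↥W) := fun h => (ρ h : V →ₗ[ℂ] V).restrict (hWinv h) with hφ
      have hφapp : ∀ (h : Q) (x : ↥W), (↑(φ h x) : V) = ρ h ↑x := by
        intro h x
        exact LinearMap.restrict_coe_apply _ _ _
      have hφcomp : ∀ (a b : Q) (x : ↥W), φ a (φ b x) = φ (a * b) x := by
        intro a b x
        apply Subtype.ext
        rw [hφapp, hφapp, hφapp]
        calc (ρ a) ((ρ b) ↑x) = (ρ a * ρ b) ↑x := rfl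
          _ = (ρ (a * b)) ↑x := by rw [_root_.map_mul]
      have hφone : ∀ x : ↥W, φ 1 x = x := by
        intro x
        apply Subtype.ext
        rw [hφapp, _root_.map_one]
        rfl
      set ρ' : Q →* (↥W ≃ₗ[ℂ] ↥W) :=
        { toFun := fun h => LinearEquiv.ofLinear (φ h) (φ h⁻¹)
            (by
              ext x
              have h1 : φ h (φ h⁻¹ x) = x := by
                rw [hφcomp, mul_inv_cancel]; exact hφone x
              exact congrArg Subtype.val h1)
            (by
              ext x
              have h1 : φ h⁻¹ (φ h x) = x := by
                rw [hφcomp, inv_mul_cancel]; exact hφone x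
              exact congrArg Subtype.val h1)
          map_one' := by
            apply LinearEquiv.ext
            intro x
            exact hφone x
          map_mul' := by
            intro a b
            apply LinearEquiv.ext
            intro x
            exact (hφcomp a b x).symm } with hρ'
      have hρ'app : ∀ (h : Q) (x : ↥W), (↑(ρ' h x) : V) = ρ h ↑x := by
        intro h x
        rw [hρ']
        simp only [MonoidHom.coe_mk, OneHom.coe_mk, LinearEquiv.ofLinear_apply]
        exact hφapp h x
      -- restrict the bilinear form to W
      set BW : ↥W →ₗ[ℂ] ↥W →ₗ[ℂ] ℂ := (B.domRestrict W).compl₂ W.subtype with hBW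
      have hBWapp : ∀ x y : ↥W, BW x y = B ↑x ↑y := fun x y => rfl
      have hBWsymm : ∀ x y : ↥W, BW x y = BW y x := by
        intro x y; rw [hBWapp, hBWapp, hsymm]
      have hBWnd : ∀ x : ↥W, (∀ y : ↥W, BW x y = 0) → x = 0 := by
        intro x hx
        apply Subtype.ext
        apply hnd
        intro v
        have hv : v ∈ W ⊔ U := by rw [hsup]; trivial
        obtain ⟨w, hw, u, hu, rfl⟩ := Submodule.mem_sup.mp hv
        rw [map_add]
        have h1 : B ↑x w = 0 := hx ⟨w, hw⟩
        have h2 : B ↑x u = 0 := horth ↑x x.2 u hu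
        rw [h1, h2, add_zero]
      have hBWpres : ∀ (h : Q) (x y : ↥W), BW (ρ' h x) (ρ' h y) = BW x y := by
        intro h x y
        rw [hBWapp, hBWapp, hρ'app, hρ'app]
        exact hpres h ↑x ↑y
      obtain ⟨w, hw0, hwfix⟩ := IH (Module.finrank ℂ ↥W) hWlt ↥W rfl hWodd
        BW hBWsymm hBWnd Q hq ρ' hBWpres
      refine ⟨↑w, ?_, ?_⟩
      · intro h0
        exact hw0 (Subtype.ext h0)
      · intro h
        have := congrArg (fun z : ↥W => (↑z : V)) (hwfix h)
        rw [← hρ'app h w]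
        exact this



/-- Let `V` be a complex vector space of odd finite dimension with a nondegenerate
symmetric bilinear form `B`, and let `Q` be a finite abelian group of odd order acting linearly
on `V` preserving `B`.  Then `Q` has a nonzero fixed vector. -/
theorem odd_order_fixed_vector
    (V : Type) [AddCommGroup V] [Module ℂ V] [FiniteDimensional ℂ V]
    (hdim : Odd (Module.finrank ℂ V))
    (B : V →ₗ[ℂ] V →ₗ[ℂ] ℂ)
    (hsymm : ∀ v w : V, B v w = B w v)
    (hnd : ∀ v : V, (∀ w : V, B v w = 0) → v = 0)
    (Q : Type) [CommGroup Q] [Fintype Q] (hodd : Odd (Fintype.card Q))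
    (ρ : Q →* (V ≃ₗ[ℂ] V))
    (hpres : ∀ (g : Q) (v w : V), B (ρ g v) (ρ g w) = B v w) :
    ∃ v : V, v ≠ 0 ∧ ∀ g : Q, ρ g v = v := by
  exact odd_order_fixed_vector_aux (Module.finrank ℂ V) V rfl hdim B hsymm hnd Q hodd ρ hpres
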